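/- arXiv:2004.02832 — 2 statements merged into one kernel-verified Lean document; each statement's English description precedes it below -/
import Mathlib

section
/- (Lemma 3, second part, cone form.) Let V be a real topological vector space and C ⊆ V a nonempty open convex cone with C ≠ V. Let T, Λ ∈ closure(C) \ C (both 'nef but not ample'), and assume that (1−s) • T + s • Λ ∈ C for every s ∈ (0,1). Then for every t ∈ (0,1), writing L_t := (1−t) • T + t • Λ, the Seshadri-type threshold satisfies σ(Λ, L_t) = 1/t, i.e. sInf {λ ∈ ℝ | λ • L_t − Λ ∈ C} = 1/t. -/
/-- Lemma 3, second part, cone form: with `T, Λ ∈ closure C \ C`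
both 'nef but not ample', and assuming `(1-s) • T + s • Λ ∈ C` for every
`s ∈ (0,1)`, we have `σ(Λ, L_t) = 1/t` for every `t ∈ (0,1)`,
where `L_t = (1-t) • T + t • Λ`. -/
theorem lemma_one_over_t_second_part
    {V : Type*} [AddCommGroup V] [Module ℝ V] [TopologicalSpace V]
    [IsTopologicalAddGroup V] [ContinuousSMul ℝ V]
    (C : Set V) (hC_open : IsOpen C) (hC_ne : C.Nonempty) (hC_proper : C ≠ Set.univ)
    (hC_cone : ∀ x ∈ C, ∀ y ∈ C, ∀ a b : ℝ, 0 < a → 0 < b → a • x + b • y ∈ C)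
    (T : V) (hT : T ∈ closure C \ C) (Λ : V) (hΛ : Λ ∈ closure C \ C)
    (hseg : ∀ s ∈ Set.Ioo (0 : ℝ) 1, (1 - s) • T + s • Λ ∈ C) :
    ∀ t ∈ Set.Ioo (0 : ℝ) 1,
      sInf {l : ℝ | l • ((1 - t) • T + t • Λ) - Λ ∈ C} = 1 / t := by
  obtain ⟨hTcl, hTnC⟩ := hT
  obtain ⟨hΛcl, hΛnC⟩ := hΛ
  -- positive scaling stays in C
  have hsmul : ∀ c : ℝ, 0 < c → ∀ x ∈ C, c • x ∈ C := by
    intro c hc x hx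
    have h := hC_cone x hx x hx (c / 2) (c / 2) (by linarith) (by linarith)
    have h2 : (c / 2) • x + (c / 2) • x = c • x := by module
    rwa [h2] at h
  -- 0 is in the closure of C
  have hzero_cl : (0 : V) ∈ closure C := by
    obtain ⟨x, hx⟩ := hC_ne
    have htend : Filter.Tendsto (fun ε : ℝ => ε • x)
        (nhdsWithin 0 (Set.Ioi 0)) (nhds 0) := by
      have h1 : Filter.Tendsto (fun ε : ℝ => ε • x) (nhds 0) (nhds ((0 : ℝ) • x)) :=
        (continuous_id.smul continuous_const).tendsto 0
      simpa using h1.mono_left nhdsWithin_le_nhds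
    refine mem_closure_of_tendsto htend ?_
    filter_upwards [self_mem_nhdsWithin] with ε hε
    exact hsmul ε hε x hx
  -- nonnegative scaling stays in the closure
  have hsmul_cl : ∀ c : ℝ, 0 ≤ c → ∀ x ∈ closure C, c • x ∈ closure C := by
    intro c hc x hx
    rcases eq_or_lt_of_le hc with h | h
    · simpa [← h] using hzero_cl
    · exact map_mem_closure (continuous_const_smul c) hx fun y hy => hsmul c h y hy
  -- element of C plus element of closure C is in C
  have hadd_cl : ∀ x ∈ C, ∀ y ∈ closure C, x + y ∈ C := by
    intro x hx y hy
    have hU : IsOpen ((fun v => x + y - v) ⁻¹' C) :=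
      hC_open.preimage (by continuity)
    have hyU : y ∈ (fun v => x + y - v) ⁻¹' C := by simpa using hx
    obtain ⟨z, hz1, hz2⟩ := mem_closure_iff.mp hy _ hU hyU
    have h := hC_cone _ hz1 z hz2 1 1 one_pos one_pos
    have heq : (1 : ℝ) • (x + y - z) + (1 : ℝ) • z = x + y := by module
    rwa [heq] at h
  -- if a • T ∈ C then a > 0 and T ∈ C; since T ∉ C, contradiction
  have hTscale : ∀ a : ℝ, a • T ∈ C → False := by
    intro a ha
    rcases le_or_gt a 0 with h | h
    · have h0 : (0 : V) ∈ C := by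
        have h1 : (-a) • T ∈ closure C := hsmul_cl (-a) (by linarith) T hTcl
        have h2 := hadd_cl _ ha _ h1
        have heq : a • T + (-a) • T = (0 : V) := by module
        rwa [heq] at h2
      have h3 := hadd_cl _ h0 _ hTcl
      rw [zero_add] at h3
      exact hTnC h3
    · have h1 := hsmul a⁻¹ (inv_pos.mpr h) _ ha
      rw [smul_smul, inv_mul_cancel₀ (ne_of_gt h), one_smul] at h1
      exact hTnC h1
  intro t ht
  obtain ⟨ht0, ht1⟩ := ht
  have hset : {l : ℝ | l • ((1 - t) • T + t • Λ) - Λ ∈ C} = Set.Ioi (1 / t) := by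
    ext l
    simp only [Set.mem_setOf_eq, Set.mem_Ioi]
    constructor
    · intro hl
      by_contra h
      push_neg at h
      have hlt : l * t ≤ 1 := by
        have := mul_le_mul_of_nonneg_right h (le_of_lt ht0)
        rwa [one_div, inv_mul_cancel₀ (ne_of_gt ht0)] at this
      have heq : (l * (1 - t)) • T =
          (l • ((1 - t) • T + t • Λ) - Λ) + (1 - l * t) • Λ := by module
      have hmem : (l * (1 - t)) • T ∈ C := by
        rw [heq]
        exact hadd_cl _ hl _ (hsmul_cl (1 - l * t) (by linarith) Λ hΛcl)
      exact hTscale _ hmem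
    · intro hl
      have h1t : (0 : ℝ) < 1 / t := by positivity
      have hl0 : 0 < l := lt_trans h1t hl
      have hlt : 1 < l * t := by
        have := mul_lt_mul_of_pos_right hl ht0
        rwa [one_div, inv_mul_cancel₀ (ne_of_gt ht0)] at this
      set a : ℝ := l * (1 - t) with ha_def
      set b : ℝ := l * t - 1 with hb_def
      have ha : 0 < a := by
        have : 0 < 1 - t := by linarith
        positivity
      have hb : 0 < b := by simp only [hb_def]; linarith
      have hab : 0 < a + b := by linarith
      set s : ℝ := b / (a + b) with hs_def
      have hs : s ∈ Set.Ioo (0 : ℝ) 1 := by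
        constructor
        · positivity
        · rw [hs_def, div_lt_one hab]; linarith
      have hmem := hsmul (a + b) hab _ (hseg s hs)
      have heq : (a + b) • ((1 - s) • T + s • Λ) =
          l • ((1 - t) • T + t • Λ) - Λ := by
        have h1 : (a + b) * (1 - s) = a := by
          rw [hs_def]; field_simp; ring
        have h2 : (a + b) * s = b := by
          rw [hs_def]; field_simp
        have : (a + b) • ((1 - s) • T + s • Λ) =
            ((a + b) * (1 - s)) • T + ((a + b) * s) • Λ := by module
        rw [this, h1, h2, ha_def, hb_def]
        module
      rwa [heq] at hmem
  rw [hset]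
  exact csInf_Ioi
end

section
/- (Lemma 3, second part, supremum form.) Let V be a real topological vector space and C ⊆ V a nonempty open convex cone with C ≠ V. Let T, Λ ∈ closure(C) \ C, and assume that (1−s) • T + s • Λ ∈ C for every s ∈ (0,1). Then for every t ∈ (0,1), writing L_t := (1−t) • T + t • Λ, one has sSup {δ ∈ ℝ | L_t − δ • Λ ∈ C} = t; that is, the dual threshold σ'(L_t, Λ) equals t. -/
/-- Lemma 3, second part, supremum form: with `T, Λ ∈ closure C \ C`
and `(1-s) • T + s • Λ ∈ C` for every `s ∈ (0,1)`, we have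
`σ'(L_t, Λ) = sSup {δ | L_t - δ • Λ ∈ C} = t` for every `t ∈ (0,1)`,
where `L_t = (1-t) • T + t • Λ`. -/
theorem lemma_one_over_t_second_part_sup
    {V : Type*} [AddCommGroup V] [Module ℝ V] [TopologicalSpace V]
    [IsTopologicalAddGroup V] [ContinuousSMul ℝ V]
    (C : Set V) (hC_open : IsOpen C) (hC_ne : C.Nonempty) (hC_proper : C ≠ Set.univ)
    (hC_cone : ∀ x ∈ C, ∀ y ∈ C, ∀ a b : ℝ, 0 < a → 0 < b → a • x + b • y ∈ C)
    (T : V) (hT : T ∈ closure C \ C) (Λ : V) (hΛ : Λ ∈ closure C \ C)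
    (hseg : ∀ s ∈ Set.Ioo (0 : ℝ) 1, (1 - s) • T + s • Λ ∈ C) :
    ∀ t ∈ Set.Ioo (0 : ℝ) 1,
      sSup {d : ℝ | ((1 - t) • T + t • Λ) - d • Λ ∈ C} = t := by
  -- closure under positive scaling
  have hscale : ∀ x ∈ C, ∀ c : ℝ, 0 < c → c • x ∈ C := by
    intro x hx c hc
    have h := hC_cone x hx x hx (c/2) (c/2) (by linarith) (by linarith)
    have h2 : (c/2) • x + (c/2) • x = c • x := by
      rw [← add_smul]; ring_nf
    rwa [h2] at h
  -- closure C is closed under positive scaling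
  have hscale' : ∀ x ∈ closure C, ∀ c : ℝ, 0 < c → c • x ∈ closure C := by
    intro x hx c hc
    have hcont : Continuous (fun u : V => c • u) := continuous_const_smul c
    have h1 : (fun u : V => c • u) x ∈ closure ((fun u : V => c • u) '' C) :=
      (image_closure_subset_closure_image hcont) ⟨x, hx, rfl⟩
    refine closure_mono ?_ h1
    rintro _ ⟨u, hu, rfl⟩
    exact hscale u hu c hc
  -- C + closure C ⊆ C
  have hadd : ∀ x ∈ C, ∀ y ∈ closure C, x + y ∈ C := by
    intro x hx y hy
    have hcont : Continuous (fun u : V => x + y - u) := continuous_const.sub continuous_id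
    have hopen : IsOpen ((fun u : V => x + y - u) ⁻¹' C) := hC_open.preimage hcont
    have hymem : y ∈ (fun u : V => x + y - u) ⁻¹' C := by
      simp only [Set.mem_preimage, add_sub_cancel_right]; exact hx
    obtain ⟨z, hz1, hz2⟩ := _root_.mem_closure_iff.mp hy _ hopen hymem
    have h := hC_cone _ hz1 _ hz2 1 1 one_pos one_pos
    simpa using h
  -- T ∉ C even after scaling
  have hTscale : ∀ c : ℝ, 0 < c → c • T ∉ C := by
    intro c hc hmem
    have := hscale _ hmem (c⁻¹) (by positivity)
    rw [smul_smul, inv_mul_cancel₀ hc.ne', one_smul] at this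
    exact hT.2 this
  intro t ht
  obtain ⟨ht0, ht1⟩ := ht
  have hkey : {d : ℝ | ((1 - t) • T + t • Λ) - d • Λ ∈ C} = Set.Iio t := by
    ext d
    simp only [Set.mem_setOf_eq, Set.mem_Iio]
    have heq : ((1 - t) • T + t • Λ) - d • Λ = (1 - t) • T + (t - d) • Λ := by
      module
    rw [heq]
    constructor
    · intro hmem
      by_contra hcon
      push_neg at hcon
      rcases eq_or_lt_of_le hcon with h | h
      · -- d = t
        rw [← h, sub_self, zero_smul, add_zero] at hmem
        exact hTscale (1 - t) (by linarith) hmem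
      · -- d > t : add (d - t) • Λ back
        have hΛ' : (d - t) • Λ ∈ closure C := hscale' Λ hΛ.1 _ (by linarith)
        have h2 := hadd _ hmem _ hΛ'
        have h3 : (1 - t) • T + (t - d) • Λ + (d - t) • Λ = (1 - t) • T := by
          module
        rw [h3] at h2
        exact hTscale (1 - t) (by linarith) h2
    · intro hd
      set s : ℝ := (t - d) / (1 - d) with hs
      have hd1 : d < 1 := lt_trans hd ht1
      have h1d : (0:ℝ) < 1 - d := by linarith
      have hs0 : 0 < s := div_pos (by linarith) h1d
      have hs1 : s < 1 := (div_lt_one h1d).mpr (by linarith)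
      have hsC := hseg s ⟨hs0, hs1⟩
      have h2 := hscale _ hsC (1 - d) h1d
      have h3 : (1 - d) • ((1 - s) • T + s • Λ) = (1 - t) • T + (t - d) • Λ := by
        rw [hs]
        have h1s : (1 - d) * (1 - (t - d) / (1 - d)) = 1 - t := by
          field_simp
          ring
        have h2s : (1 - d) * ((t - d) / (1 - d)) = t - d := by
          field_simp
        rw [smul_add, smul_smul, smul_smul, h1s, h2s]
      rwa [h3] at h2
  rw [hkey, csSup_Iio]
end
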